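/- Let n be a positive integer, a = (a_1,...,a_n) and b = (b_1,...,b_n) be n-tuples of complex numbers with b_k ≠ 0 for all k, and p = (p_1,...,p_n) nonnegative real weights with ∑_{i=1}^n p_i = 1. Suppose there exist α ∈ ℂ and r > 0 with r > |α| such that a_k / conj(b_k) ∈ D̄(α,r) for every k ∈ {1,...,n}. Then ∑_{k=1}^n p_k |a_k|^2 ≤ (r^2 - |α|^2) ∑_{k=1}^n p_k |b_k|^2 + 2 Re[ conj(α) · ∑_{k=1}^n p_k a_k b_k ] ≤ (r^2 - |α|^2) ∑_{k=1}^n p_k |b_k|^2 + 2 |α| · | ∑_{k=1}^n p_k a_k b_k |. -/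

import Mathlib

theorem stmt_4 (n : ℕ) (hn : 0 < n) (a b : Fin n → ℂ) (p : Fin n → ℝ)
    (hb : ∀ k, b k ≠ 0) (hp : ∀ k, 0 ≤ p k) (hp1 : ∑ i, p i = 1)
    (α : ℂ) (r : ℝ) (hr : 0 < r) (hαr : ‖α‖ < r)
    (h : ∀ k, ‖a k / (starRingEnd ℂ) (b k) - α‖ ≤ r) :
    ∑ k, p k * ‖a k‖ ^ 2
      ≤ (r ^ 2 - ‖α‖ ^ 2) * ∑ k, p k * ‖b k‖ ^ 2
        + 2 * ((starRingEnd ℂ) α * ∑ k, (p k : ℂ) * a k * b k).re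
    ∧ (r ^ 2 - ‖α‖ ^ 2) * ∑ k, p k * ‖b k‖ ^ 2
        + 2 * ((starRingEnd ℂ) α * ∑ k, (p k : ℂ) * a k * b k).re
      ≤ (r ^ 2 - ‖α‖ ^ 2) * ∑ k, p k * ‖b k‖ ^ 2
        + 2 * ‖α‖ * ‖∑ k, (p k : ℂ) * a k * b k‖ := by
  constructor
  · have key : ∀ k, ‖a k‖ ^ 2 ≤
        (r ^ 2 - ‖α‖ ^ 2) * ‖b k‖ ^ 2
          + 2 * ((starRingEnd ℂ) α * (a k * b k)).re := by
      intro k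
      have hcb : (starRingEnd ℂ) (b k) ≠ 0 := by
        simpa using hb k
      have h1 : ‖a k - α * (starRingEnd ℂ) (b k)‖ ≤ r * ‖b k‖ := by
        have := mul_le_mul_of_nonneg_right (h k) (norm_nonneg ((starRingEnd ℂ) (b k)))
        rw [← norm_mul, sub_mul, div_mul_cancel₀ _ hcb] at this
        simpa using this
      have h2 : ‖a k - α * (starRingEnd ℂ) (b k)‖ ^ 2
          ≤ (r * ‖b k‖) ^ 2 := by
        apply pow_le_pow_left₀ (norm_nonneg _) h1
      rw [Complex.sq_norm, Complex.normSq_sub] at h2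
      rw [Complex.sq_norm (a k)] at *
      have e1 : Complex.normSq (α * (starRingEnd ℂ) (b k))
          = ‖α‖ ^ 2 * ‖b k‖ ^ 2 := by
        rw [map_mul]
        simp [Complex.sq_norm, Complex.normSq_conj]
      have e2 : (a k * (starRingEnd ℂ) (α * (starRingEnd ℂ) (b k))).re
          = ((starRingEnd ℂ) α * (a k * b k)).re := by
        rw [map_mul]
        simp [mul_comm, mul_assoc, mul_left_comm]
      rw [e1, e2] at h2
      nlinarith [h2]
    calc ∑ k, p k * ‖a k‖ ^ 2
        ≤ ∑ k, p k * ((r ^ 2 - ‖α‖ ^ 2) * ‖b k‖ ^ 2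
            + 2 * ((starRingEnd ℂ) α * (a k * b k)).re) := by
          apply Finset.sum_le_sum
          intro k _
          exact mul_le_mul_of_nonneg_left (key k) (hp k)
      _ = (r ^ 2 - ‖α‖ ^ 2) * ∑ k, p k * ‖b k‖ ^ 2
            + 2 * ((starRingEnd ℂ) α * ∑ k, (p k : ℂ) * a k * b k).re := by
          rw [Finset.mul_sum, Finset.mul_sum, Complex.re_sum, Finset.mul_sum,
            ← Finset.sum_add_distrib]
          apply Finset.sum_congr rfl
          intro k _
          have : (starRingEnd ℂ) α * ((p k : ℂ) * a k * b k)
              = (p k : ℂ) * ((starRingEnd ℂ) α * (a k * b k)) := by ring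
          rw [this, Complex.re_ofReal_mul]
          ring
  · apply add_le_add_right
    rw [mul_assoc]
    apply mul_le_mul_of_nonneg_left _ (by norm_num : (0:ℝ) ≤ 2)
    calc ((starRingEnd ℂ) α * ∑ k, (p k : ℂ) * a k * b k).re
        ≤ ‖(starRingEnd ℂ) α * ∑ k, (p k : ℂ) * a k * b k‖ :=
          Complex.re_le_norm _
      _ = ‖α‖ * ‖∑ k, (p k : ℂ) * a k * b k‖ := by
          rw [norm_mul]; simp
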